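/- arXiv:1810.12677 — 8 statements merged into one kernel-verified Lean document; each statement's English description precedes it below -/
import Mathlib

section
/- Let K be a field and S an n×n matrix over K (n a nonempty finite index type). Then the characteristic polynomial of S equals the minimal polynomial of S if and only if every n×n matrix H over K satisfying HS = SH can be written as H = p(S) for some polynomial p with coefficients in K. -/
open Polynomial Matrix Module

section Aux

variable {K : Type*} [Field K] {n : Type*} [Fintype n] [DecidableEq n] [Nonempty n]

private lemma aeval_mulVecLin (S : Matrix n n K) (p : K[X]) :
    aeval S.mulVecLin p = (aeval S p).mulVecLin := by
  have h := Polynomial.aeval_algHom_apply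
    (Matrix.toLinAlgEquiv' : Matrix n n K ≃ₐ[K] _).toAlgHom S p
  rw [show ((Matrix.toLinAlgEquiv' : Matrix n n K ≃ₐ[K] _).toAlgHom S) = S.mulVecLin from rfl] at h
  rw [h]; rfl

private lemma of_symm_smul' (S : Matrix n n K) (p : K[X]) (x : Module.AEval' S.mulVecLin) :
    (AEval'.of S.mulVecLin).symm (p • x) = (aeval S p).mulVec ((AEval'.of S.mulVecLin).symm x) := by
  rw [Module.AEval.of_symm_smul, aeval_mulVecLin]
  rfl

end Aux

set_option maxHeartbeats 1000000 in
theorem stmt_0 {K : Type*} [Field K] {n : Type*} [Fintype n] [DecidableEq n] [Nonempty n]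
    (S : Matrix n n K) :
    S.charpoly = minpoly K S ↔
      ∀ H : Matrix n n K, H * S = S * H → ∃ p : K[X], Polynomial.aeval S p = H := by
  classical
  have hSint : IsIntegral K S := Matrix.isIntegral S
  set m := minpoly K S with hmdef
  have hm0 : m ≠ 0 := minpoly.ne_zero hSint
  have hchar0 : S.charpoly ≠ 0 := S.charpoly_monic.ne_zero
  have hmdvd : m ∣ S.charpoly := Matrix.minpoly_dvd_charpoly S
  have hcard : S.charpoly.natDegree = Fintype.card n := S.charpoly_natDegree_eq_dim
  have hiff : S.charpoly = m ↔ m.natDegree = Fintype.card n := by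
    constructor
    · intro h; rw [← h]; exact hcard
    · intro h
      obtain ⟨c, hc⟩ := hmdvd
      have hc0 : c ≠ 0 := by rintro rfl; rw [mul_zero] at hc; exact hchar0 hc
      have hdeg : c.natDegree = 0 := by
        have := Polynomial.natDegree_mul hm0 hc0
        rw [← hc, hcard, h] at this
        omega
      have hcmonic : c.Monic := (minpoly.monic hSint).of_mul_monic_left (hc ▸ S.charpoly_monic)
      have : c = 1 := hcmonic.natDegree_eq_zero.mp hdeg
      rw [hc, this, mul_one]
    -- end hiff
  let of := AEval'.of S.mulVecLin
  have hsmul : ∀ (p : K[X]) (x), of.symm (p • x) = (aeval S p).mulVec (of.symm x) :=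
    of_symm_smul' S
  have hkill : ∀ (g : K[X]), aeval S g = 0 → ∀ x : Module.AEval' S.mulVecLin, g • x = 0 := by
    intro g hg x
    apply of.symm.injective
    rw [hsmul, hg, map_zero, zero_mulVec]
  have hmkill : ∀ x : Module.AEval' S.mulVecLin, m • x = 0 :=
    hkill m (minpoly.aeval K S)
  have htors : Module.IsTorsion K[X] (Module.AEval' S.mulVecLin) := fun x =>
    ⟨⟨m, mem_nonZeroDivisors_of_ne_zero hm0⟩, hmkill x⟩
  obtain ⟨ι, hι, p, hirr, e, ⟨eqv⟩⟩ := Module.equiv_directSum_of_isTorsion htors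
  set q : ι → K[X] := fun i => p i ^ e i with hqdef
  have hq0 : ∀ i, q i ≠ 0 := fun i => pow_ne_zero _ (hirr i).ne_zero
  -- basic facts about the blocks
  have hmk0 : ∀ (i : ι) (r : K[X]),
      (Submodule.Quotient.mk r : K[X] ⧸ (K[X] ∙ q i)) = 0 ↔ q i ∣ r := by
    intro i r
    rw [Submodule.Quotient.mk_eq_zero, Submodule.mem_span_singleton]
    constructor
    · rintro ⟨a, rfl⟩; exact Dvd.intro_left a rfl
    · rintro ⟨a, rfl⟩; exact ⟨a, mul_comm a (q i)⟩
  have hsmulmk : ∀ (i : ι) (r s : K[X]),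
      r • (Submodule.Quotient.mk s : K[X] ⧸ (K[X] ∙ q i)) = Submodule.Quotient.mk (r * s) := by
    intro i r s; rfl
  -- each q i divides m
  have hDkill : ∀ (g : K[X]), aeval S g = 0 →
      ∀ d : DirectSum ι (fun i => K[X] ⧸ (K[X] ∙ q i)), g • d = 0 := by
    intro g hg d
    have h1 : g • eqv.symm d = 0 := hkill g hg _
    have h2 := congrArg eqv h1
    rw [_root_.map_smul, eqv.apply_symm_apply, map_zero] at h2
    exact h2
  have hqm : ∀ i, q i ∣ m := by
    intro i
    have h1 := hDkill m (minpoly.aeval K S)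
      (DirectSum.lof K[X] ι (fun i => K[X] ⧸ (K[X] ∙ q i)) i (Submodule.Quotient.mk 1))
    rw [← _root_.map_smul] at h1
    have h2 := congrArg (fun z => z i) h1
    simp only [DirectSum.lof_apply, DirectSum.zero_apply] at h2
    rw [hsmulmk, mul_one] at h2
    exact (hmk0 i m).mp h2
  -- each block is finite dimensional over K with dimension the degree of q i
  have hBequiv : ∀ i : ι,
      Nonempty ((degreeLT K ((q i).natDegree)) ≃ₗ[K] (K[X] ⧸ (K[X] ∙ q i))) := by
    intro i
    let θ : degreeLT K ((q i).natDegree) →ₗ[K] (K[X] ⧸ (K[X] ∙ q i)) :=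
      ((K[X] ∙ q i).mkQ.restrictScalars K).comp (Submodule.subtype _)
    have hθ : ∀ x : degreeLT K ((q i).natDegree), θ x = Submodule.Quotient.mk x.1 := by
      intro x; rfl
    have hinj : Function.Injective θ := by
      rw [injective_iff_map_eq_zero]
      rintro ⟨r, hr⟩ h0
      rw [hθ] at h0
      have hdvd : q i ∣ r := (hmk0 i r).mp h0
      have hdeg : r.degree < (q i).degree := by
        rw [Polynomial.degree_eq_natDegree (hq0 i)]
        exact Polynomial.mem_degreeLT.mp hr
      exact Subtype.ext (Polynomial.eq_zero_of_dvd_of_degree_lt hdvd hdeg)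
    have hsurj : Function.Surjective θ := by
      intro x
      obtain ⟨s, rfl⟩ := Submodule.Quotient.mk_surjective _ x
      refine ⟨⟨s % q i, ?_⟩, ?_⟩
      · rw [Polynomial.mem_degreeLT, ← Polynomial.degree_eq_natDegree (hq0 i)]
        exact EuclideanDomain.mod_lt s (hq0 i)
      · rw [hθ]
        rw [Submodule.Quotient.eq]
        have hrepr : s % q i - s = -(q i * (s / q i)) := by
          have h := EuclideanDomain.div_add_mod s (q i)
          linear_combination h
        rw [hrepr]
        exact Submodule.neg_mem _
          (Submodule.mem_span_singleton.mpr ⟨s / q i, mul_comm (s / q i) (q i)⟩)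
    exact ⟨LinearEquiv.ofBijective θ ⟨hinj, hsurj⟩⟩
  have hdleq : ∀ N : ℕ, FiniteDimensional K (degreeLT K N) := fun N =>
    Module.Finite.equiv (Polynomial.degreeLTEquiv K N).symm
  haveI hBfd : ∀ i : ι, FiniteDimensional K (K[X] ⧸ (K[X] ∙ q i)) := by
    intro i
    obtain ⟨E⟩ := hBequiv i
    exact Module.Finite.equiv E
  have hBrank : ∀ i : ι, finrank K (K[X] ⧸ (K[X] ∙ q i)) = (q i).natDegree := by
    intro i
    obtain ⟨E⟩ := hBequiv i
    rw [← E.finrank_eq, (Polynomial.degreeLTEquiv K _).finrank_eq, Module.finrank_pi,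
      Fintype.card_fin]
  have hsum : ∑ i, (q i).natDegree = Fintype.card n := by
    have h1 : finrank K (Module.AEval' S.mulVecLin) = Fintype.card n := by
      rw [← of.finrank_eq, Module.finrank_pi]
    have h2 : finrank K (Module.AEval' S.mulVecLin)
        = ∑ i, finrank K (K[X] ⧸ (K[X] ∙ q i)) := by
      rw [(eqv.restrictScalars K).finrank_eq]
      exact Module.finrank_directSum (R := K) (M := fun i => K[X] ⧸ (K[X] ∙ q i))
    rw [h1] at h2
    rw [h2]
    exact Finset.sum_congr rfl fun i _ => (hBrank i).symm
  have hcompkill : ∀ (r : K[X]) (k : ι), q k ∣ r →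
      ∀ b : K[X] ⧸ (K[X] ∙ q k), r • b = 0 := by
    intro r k hdvd b
    obtain ⟨s, hs⟩ := Submodule.Quotient.mk_surjective _ b
    rw [← hs, hsmulmk]
    exact (hmk0 k _).mpr (dvd_mul_of_dvd_left hdvd s)
  have haevalzero : ∀ g : K[X], (∀ y : n → K, (aeval S g).mulVec y = 0) → aeval S g = 0 := by
    intro g hg
    have h : Matrix.toLin' (aeval S g) = Matrix.toLin' (0 : Matrix n n K) := by
      refine LinearMap.ext fun y => ?_
      rw [Matrix.toLin'_apply, Matrix.toLin'_apply, hg, Matrix.zero_mulVec]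
    exact Matrix.toLin'.injective h
  rw [hiff]
  by_cases hcop : Pairwise (Function.onFun IsCoprime q)
  · have hprod0 : (∏ k, q k) ≠ 0 := Finset.prod_ne_zero_iff.mpr fun k _ => hq0 k
    have hdegprod : (∏ k, q k).natDegree = Fintype.card n := by
      rw [Polynomial.natDegree_prod _ _ fun k _ => hq0 k]; exact hsum
    have hLHS : m.natDegree = Fintype.card n := by
      have hdd : (∏ k, q k) ∣ m := Fintype.prod_dvd_of_coprime hcop hqm
      have h2 := Polynomial.natDegree_le_of_dvd hdd hm0
      have h3 := Polynomial.natDegree_le_of_dvd hmdvd hchar0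
      rw [hdegprod] at h2; rw [hcard] at h3; omega
    refine iff_of_true hLHS ?_
    intro H hHS
    set v0 : DirectSum ι (fun k => K[X] ⧸ (K[X] ∙ q k)) :=
      ∑ k, DirectSum.lof K[X] ι _ k (Submodule.Quotient.mk 1) with hv0def
    set vM : n → K := of.symm (eqv.symm v0) with hvMdef
    have hv0k : ∀ k, v0 k = Submodule.Quotient.mk 1 := by
      intro k
      rw [hv0def, DFinsupp.finset_sum_apply]
      rw [Finset.sum_eq_single k]
      · exact DirectSum.lof_apply _ _ _
      · intro b _ hb
        rw [DirectSum.lof_eq_of]; exact DirectSum.of_eq_of_ne _ _ _ hb.symm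
      · intro hk; exact absurd (Finset.mem_univ k) hk
    have hord : ∀ r : K[X], (aeval S r).mulVec vM = 0 → (∏ k, q k) ∣ r := by
      intro r hr
      have h1 : r • (eqv.symm v0) = 0 := by
        apply of.symm.injective
        rw [hsmul, map_zero]
        rw [hvMdef] at hr
        exact hr
      have h2 : r • v0 = 0 := by
        apply eqv.symm.injective
        rw [map_zero, _root_.map_smul]
        exact h1
      have h3 : ∀ k, q k ∣ r := by
        intro k
        have h4 : (r • v0) k = 0 := by rw [h2]; rfl
        have h5 : (r • v0) k = r • (v0 k) := rfl
        rw [h5, hv0k, hsmulmk, mul_one] at h4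
        exact (hmk0 k r).mp h4
      exact Fintype.prod_dvd_of_coprime hcop h3
    set ψ : degreeLT K (Fintype.card n) →ₗ[K] (n → K) :=
      { toFun := fun r => (aeval S r.1).mulVec vM
        map_add' := by
          intro a b
          show (aeval S ((a : K[X]) + (b : K[X]))).mulVec vM = _
          rw [map_add, Matrix.add_mulVec]
        map_smul' := by
          intro t a
          show (aeval S (t • (a : K[X]))).mulVec vM = _
          rw [Polynomial.smul_eq_C_mul, _root_.map_mul, Polynomial.aeval_C, ← Algebra.smul_def,
            Matrix.smul_mulVec]
          rfl } with hψdef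
    have hψinj : Function.Injective ψ := by
      rw [injective_iff_map_eq_zero]
      rintro ⟨r, hrmem⟩ h0
      have h1 : (∏ k, q k) ∣ r := hord r h0
      have hdeg : r.degree < (∏ k, q k).degree := by
        rw [Polynomial.degree_eq_natDegree hprod0, hdegprod]
        exact Polynomial.mem_degreeLT.mp hrmem
      exact Subtype.ext (Polynomial.eq_zero_of_dvd_of_degree_lt h1 hdeg)
    haveI : FiniteDimensional K (degreeLT K (Fintype.card n)) := hdleq _
    have hψsurj : Function.Surjective ψ := by
      have hfr : finrank K (degreeLT K (Fintype.card n)) = finrank K (n → K) := by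
        rw [(Polynomial.degreeLTEquiv K (Fintype.card n)).finrank_eq, Module.finrank_pi,
          Fintype.card_fin, Module.finrank_pi]
      exact (LinearMap.injective_iff_surjective_of_finrank_eq_finrank hfr).mp hψinj
    obtain ⟨r, hrr⟩ := hψsurj (H.mulVec vM)
    refine ⟨r.1, ?_⟩
    have hcomm : ∀ s : K[X], H * aeval S s = aeval S s * H := by
      intro s
      induction s using Polynomial.induction_on with
      | C a => rw [Polynomial.aeval_C]; exact (Algebra.commutes a H).symm
      | add u w hu hw => rw [map_add, mul_add, add_mul, hu, hw]
      | monomial k a hs =>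
        rw [pow_succ, ← mul_assoc, _root_.map_mul, Polynomial.aeval_X, ← mul_assoc, hs,
          mul_assoc, hHS, ← mul_assoc]
    apply Matrix.toLin'.injective
    refine LinearMap.ext fun w => ?_
    rw [Matrix.toLin'_apply, Matrix.toLin'_apply]
    obtain ⟨s, hss⟩ := hψsurj w
    have hw : w = (aeval S s.1).mulVec vM := hss.symm
    rw [hw]
    calc (aeval S r.1).mulVec ((aeval S s.1).mulVec vM)
        = (aeval S r.1 * aeval S s.1).mulVec vM := by rw [Matrix.mulVec_mulVec]
      _ = (aeval S s.1 * aeval S r.1).mulVec vM := by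
          rw [← _root_.map_mul, mul_comm r.1 s.1, _root_.map_mul]
      _ = (aeval S s.1).mulVec ((aeval S r.1).mulVec vM) := by rw [Matrix.mulVec_mulVec]
      _ = (aeval S s.1).mulVec (ψ r) := rfl
      _ = (aeval S s.1).mulVec (H.mulVec vM) := by rw [hrr]
      _ = (aeval S s.1 * H).mulVec vM := by rw [Matrix.mulVec_mulVec]
      _ = (H * aeval S s.1).mulVec vM := by rw [hcomm s.1]
      _ = H.mulVec ((aeval S s.1).mulVec vM) := by rw [Matrix.mulVec_mulVec]
  · have hkey : ∃ i j, i ≠ j ∧ e i ≠ 0 ∧ e i ≤ e j ∧ Associated (p i) (p j) := by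
      rw [Pairwise] at hcop
      push_neg at hcop
      obtain ⟨i, j, hij, hnc⟩ := hcop
      have hei : e i ≠ 0 := by
        rintro h0
        apply hnc
        show IsCoprime (q i) (q j)
        have h1 : q i = 1 := by simp [hqdef, h0]
        rw [h1]; exact isCoprime_one_left
      have hej : e j ≠ 0 := by
        rintro h0
        apply hnc
        show IsCoprime (q i) (q j)
        have h1 : q j = 1 := by simp [hqdef, h0]
        rw [h1]; exact isCoprime_one_right
      have hassoc : Associated (p i) (p j) := by
        by_contra hna
        have hnd : ¬ p i ∣ p j := fun hd => hna ((hirr i).associated_of_dvd (hirr j) hd)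
        have hco : IsCoprime (p i) (p j) := ((hirr i).coprime_iff_not_dvd).mpr hnd
        exact hnc (hco.pow : IsCoprime (p i ^ e i) (p j ^ e j))
      rcases le_total (e i) (e j) with hle | hle
      · exact ⟨i, j, hij, hei, hle, hassoc⟩
      · exact ⟨j, i, hij.symm, hej, hle, hassoc.symm⟩
    obtain ⟨i, j, hij, hei0, heij, hassoc⟩ := hkey
    have hej0 : e j ≠ 0 := by omega
    have hqij : q i ∣ q j := by
      rw [hqdef]
      exact dvd_trans (hassoc.pow_pow (n := e i)).dvd (pow_dvd_pow (p j) heij)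
    have hLHSfalse : ¬ (m.natDegree = Fintype.card n) := by
      intro hdegm
      set g : K[X] := ∏ k ∈ Finset.univ.erase i, q k with hgdef
      have hg0 : g ≠ 0 := Finset.prod_ne_zero_iff.mpr fun k _ => hq0 k
      have hgk : ∀ k, q k ∣ g := by
        intro k
        by_cases hk : k = i
        · subst hk
          exact dvd_trans hqij (Finset.dvd_prod_of_mem q (Finset.mem_erase.mpr ⟨hij.symm, Finset.mem_univ j⟩))
        · exact Finset.dvd_prod_of_mem q (Finset.mem_erase.mpr ⟨hk, Finset.mem_univ k⟩)
      have hDg : ∀ d : DirectSum ι (fun k => K[X] ⧸ (K[X] ∙ q k)), g • d = 0 := by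
        intro d
        induction d using DirectSum.induction_on with
        | zero => rw [smul_zero]
        | of k b =>
          rw [← DirectSum.lof_eq_of K[X], ← _root_.map_smul, hcompkill g k (hgk k) b, map_zero]
        | add x y hx hy => rw [smul_add, hx, hy, add_zero]
      have hgaeval : aeval S g = 0 := by
        apply haevalzero
        intro y
        have h1 : g • (of y) = 0 := by
          apply eqv.injective
          rw [_root_.map_smul, map_zero]
          exact hDg _
        have h2 := hsmul g (of y)
        rw [h1, map_zero, LinearEquiv.symm_apply_apply] at h2
        exact h2.symm
      have hdvdg : m ∣ g := minpoly.dvd K S hgaeval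
      have hdegg : g.natDegree < Fintype.card n := by
        have h1 : g.natDegree = ∑ k ∈ Finset.univ.erase i, (q k).natDegree := by
          rw [hgdef]; exact Polynomial.natDegree_prod _ _ fun k _ => hq0 k
        have h2 : ∑ k ∈ Finset.univ.erase i, (q k).natDegree + (q i).natDegree
            = ∑ k, (q k).natDegree := Finset.sum_erase_add _ _ (Finset.mem_univ i)
        have h3 : 0 < (q i).natDegree := by
          rw [hqdef]
          rw [Polynomial.natDegree_pow]
          have := (hirr i).natDegree_pos
          positivity
        omega
      have := Polynomial.natDegree_le_of_dvd hdvdg hg0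
      omega
    refine iff_of_false hLHSfalse ?_
    intro hALL
    set c : K[X] := p j ^ (e j - e i) with hcdef
    have hcq : q j ∣ c * q i := by
      have h1 : q j = c * p j ^ e i := by
        rw [hcdef, ← pow_add]
        show p j ^ e j = p j ^ (e j - e i + e i)
        congr 1
        omega
      rw [h1]
      exact mul_dvd_mul_left c ((hassoc.pow_pow (n := e i)).symm.dvd)
    have hker : (K[X] ∙ q i) ≤ LinearMap.ker (c • (K[X] ∙ q j).mkQ) := by
      intro x hx
      obtain ⟨t, rfl⟩ := Submodule.mem_span_singleton.mp hx
      rw [LinearMap.mem_ker, LinearMap.smul_apply, Submodule.mkQ_apply, hsmulmk]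
      refine (hmk0 j _).mpr (dvd_trans hcq ⟨t, ?_⟩)
      rw [smul_eq_mul]; ring
    set η : (K[X] ⧸ (K[X] ∙ q i)) →ₗ[K[X]] (K[X] ⧸ (K[X] ∙ q j)) :=
      Submodule.liftQ _ (c • (K[X] ∙ q j).mkQ) hker with hηdef
    set HD : DirectSum ι (fun k => K[X] ⧸ (K[X] ∙ q k)) →ₗ[K[X]]
        DirectSum ι (fun k => K[X] ⧸ (K[X] ∙ q k)) :=
      (DirectSum.lof K[X] ι _ j) ∘ₗ η ∘ₗ (DirectSum.component K[X] ι _ i) with hHDdef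
    set F : Module.AEval' S.mulVecLin →ₗ[K[X]] Module.AEval' S.mulVecLin :=
      (eqv.symm.toLinearMap) ∘ₗ HD ∘ₗ eqv.toLinearMap with hFdef
    set F0 : (n → K) →ₗ[K] (n → K) :=
      (of.symm.toLinearMap) ∘ₗ (F.restrictScalars K) ∘ₗ of.toLinearMap with hF0def
    set H : Matrix n n K := LinearMap.toMatrix' F0 with hHdef
    have hHapp : ∀ y, H.mulVec y = of.symm (F (of y)) := by
      intro y
      have h1 : H.mulVec y = (Matrix.toLin' H) y := (Matrix.toLin'_apply H y).symm
      rw [h1, hHdef, Matrix.toLin'_toMatrix']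
      rfl
    have hHS : H * S = S * H := by
      apply Matrix.toLin'.injective
      rw [Matrix.toLin'_mul, Matrix.toLin'_mul]
      refine LinearMap.ext fun y => ?_
      rw [LinearMap.comp_apply, LinearMap.comp_apply, Matrix.toLin'_apply, Matrix.toLin'_apply,
        Matrix.toLin'_apply, Matrix.toLin'_apply, hHapp, hHapp]
      have h2 : of (S.mulVec y) = (X : K[X]) • of y := (Module.AEval'.X_smul_of _ _).symm
      rw [h2, _root_.map_smul, hsmul, Polynomial.aeval_X]
    obtain ⟨r, hr⟩ := hALL H hHS
    set d0 : DirectSum ι (fun k => K[X] ⧸ (K[X] ∙ q k)) :=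
      DirectSum.lof K[X] ι _ i (Submodule.Quotient.mk 1) with hd0def
    set y0 : n → K := of.symm (eqv.symm d0) with hy0def
    have hHy0 : H.mulVec y0 =
        of.symm (eqv.symm (DirectSum.lof K[X] ι _ j (Submodule.Quotient.mk c))) := by
      rw [hHapp]
      congr 1
      have h1 : of y0 = eqv.symm d0 := by rw [hy0def, LinearEquiv.apply_symm_apply]
      rw [h1, hFdef]
      show eqv.symm (HD (eqv (eqv.symm d0))) = _
      rw [eqv.apply_symm_apply]
      congr 1
      rw [hHDdef, hd0def]
      rw [LinearMap.comp_apply, LinearMap.comp_apply, DirectSum.component.lof_self]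
      congr 1
      rw [hηdef, Submodule.liftQ_apply, LinearMap.smul_apply, Submodule.mkQ_apply, hsmulmk,
        mul_one]
    have hL : (aeval S r).mulVec y0 = of.symm (eqv.symm (r • d0)) := by
      rw [hy0def, ← hsmul]
      congr 1
      rw [← _root_.map_smul]
    have heq : r • d0 = DirectSum.lof K[X] ι _ j (Submodule.Quotient.mk c) := by
      apply eqv.symm.injective
      apply of.symm.injective
      rw [← hL, hr, hHy0]
    have hj : (r • d0) j = (DirectSum.lof K[X] ι (fun k => K[X] ⧸ (K[X] ∙ q k)) j
        (Submodule.Quotient.mk c)) j := by rw [heq]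
    have hdj : d0 j = 0 := by
      rw [hd0def, DirectSum.lof_eq_of]
      exact DirectSum.of_eq_of_ne _ _ _ hij.symm
    have hrd : (r • d0) j = r • (d0 j) := rfl
    have hlofj : (DirectSum.lof K[X] ι (fun k => K[X] ⧸ (K[X] ∙ q k)) j
        (Submodule.Quotient.mk c)) j = Submodule.Quotient.mk c := DirectSum.lof_apply _ _ _
    rw [hrd, hdj, smul_zero, hlofj] at hj
    have hdvdc : q j ∣ c := (hmk0 j c).mp hj.symm
    rw [hqdef, hcdef] at hdvdc
    have hle := (pow_dvd_pow_iff (hirr j).ne_zero (hirr j).not_isUnit).mp hdvdc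
    omega
end

section
/- For any n×n complex matrix S, there exists an n×n complex matrix T and a polynomial r with complex coefficients such that S = r(T) and the characteristic polynomial of T equals the minimal polynomial of T. -/
set_option maxHeartbeats 2000000

open Polynomial Matrix DirectSum

noncomputable section StmtAux

/-- Conjugation by a linear equivalence, as an algebra equivalence of endomorphism algebras. -/
def endCongr {R M N : Type*} [CommSemiring R] [AddCommMonoid M] [AddCommMonoid N]
    [Module R M] [Module R N] (e : M ≃ₗ[R] N) :
    Module.End R M ≃ₐ[R] Module.End R N :=
  { e.conj with
    map_mul' := fun f g => by
      ext x
      simp [LinearEquiv.conj_apply, Module.End.mul_apply]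
    commutes' := fun r => by
      ext x
      simp [LinearEquiv.conj_apply, Module.algebraMap_end_apply] }

lemma endCongr_apply {R M N : Type*} [CommSemiring R] [AddCommMonoid M] [AddCommMonoid N]
    [Module R M] [Module R N] (e : M ≃ₗ[R] N) (f : Module.End R M) (x : N) :
    endCongr e f x = e (f (e.symm x)) := rfl

/-- A matrix whose minimal polynomial has degree at least `n` is nonderogatory. -/
lemma charpoly_eq_minpoly_aux {n : ℕ} (T : Matrix (Fin n) (Fin n) ℂ)
    (q : ℂ[X]) (hdeg : n ≤ q.natDegree) (hdvd : q ∣ minpoly ℂ T) :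
    T.charpoly = minpoly ℂ T := by
  have hint : IsIntegral ℂ T := ⟨T.charpoly, T.charpoly_monic, T.aeval_self_charpoly⟩
  have hmono : (minpoly ℂ T).Monic := minpoly.monic hint
  have h1 : minpoly ℂ T ∣ T.charpoly := minpoly.dvd _ _ T.aeval_self_charpoly
  have h2 : T.charpoly.natDegree ≤ (minpoly ℂ T).natDegree := by
    rw [T.charpoly_natDegree_eq_dim, Fintype.card_fin]
    exact le_trans hdeg (Polynomial.natDegree_le_of_dvd hdvd hmono.ne_zero)
  exact Polynomial.eq_of_monic_of_dvd_of_natDegree_le hmono T.charpoly_monic h1 h2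

variable (ι : Type) [Fintype ι] (p : ι → ℂ[X]) (e : ι → ℕ) (l μ : ι → ℂ)

/-- The component linear equivalence shifting the eigenvalue from `l i` to `μ i`. -/
def ψi (i : ι) (hl : ∀ i, Associated (p i) (X - C (l i))) :
    (ℂ[X] ⧸ (ℂ[X] ∙ p i ^ e i)) ≃ₗ[ℂ] ℂ[X] ⧸ Ideal.span {(X - C (μ i)) ^ e i} :=
  have hspan : (ℂ[X] ∙ p i ^ e i) = Ideal.span {(X - C (l i)) ^ e i} := by
    rw [Ideal.submodule_span_eq, Ideal.span_singleton_eq_span_singleton]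
    exact (hl i).pow_pow
  have hmap : Ideal.span {(X - C (μ i)) ^ e i} =
      (Ideal.span {(X - C (l i)) ^ e i}).map (algEquivAevalXAddC (l i - μ i) : ℂ[X] →+* ℂ[X]) := by
    rw [Ideal.map_span, Set.image_singleton]
    have : ((algEquivAevalXAddC (l i - μ i) : ℂ[X] →+* ℂ[X])) ((X - C (l i)) ^ e i)
        = (X - C (μ i)) ^ e i := by
      rw [map_pow]
      congr 1
      show algEquivAevalXAddC (l i - μ i) (X - C (l i)) = X - C (μ i)
      rw [algEquivAevalXAddC_apply]
      simp only [map_sub, aeval_X, aeval_C, algebraMap_eq]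
      ring
    rw [this]
  ((Submodule.quotEquivOfEq _ _ hspan).restrictScalars ℂ).trans
    (Ideal.quotientEquivAlg (Ideal.span {(X - C (l i)) ^ e i}) _
      (algEquivAevalXAddC (l i - μ i)) hmap).toLinearEquiv

variable (hl : ∀ i, Associated (p i) (X - C (l i)))

lemma ψi_mk (i : ι) (w : ℂ[X]) :
    ψi ι p e l μ i hl (Submodule.Quotient.mk w)
      = Ideal.Quotient.mk _ (aeval (X + C (l i - μ i)) w) := rfl

lemma ψi_smul (i : ι) (r : ℂ[X])
    (hr : r - (X + C (l i - μ i)) ∈ Ideal.span {(X - C (μ i)) ^ e i})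
    (v : ℂ[X] ⧸ (ℂ[X] ∙ p i ^ e i)) :
    ψi ι p e l μ i hl ((X : ℂ[X]) • v) = r • ψi ι p e l μ i hl v := by
  obtain ⟨u, rfl⟩ := Submodule.Quotient.mk_surjective _ v
  have h1 : (X : ℂ[X]) • (Submodule.Quotient.mk u : ℂ[X] ⧸ (ℂ[X] ∙ p i ^ e i))
      = Submodule.Quotient.mk (X * u) := by
    rw [← Submodule.Quotient.mk_smul]; rw [smul_eq_mul]
  rw [h1, ψi_mk, ψi_mk]
  have h2 : (r • Ideal.Quotient.mk (Ideal.span {(X - C (μ i)) ^ e i}) (aeval (X + C (l i - μ i)) u))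
      = Ideal.Quotient.mk _ (r * aeval (X + C (l i - μ i)) u) := rfl
  rw [h2]
  rw [Ideal.Quotient.eq]
  have h3 : aeval (X + C (l i - μ i)) (X * u)
      = (X + C (l i - μ i)) * aeval (X + C (l i - μ i)) u := by
    rw [_root_.map_mul, aeval_X]
  rw [h3]
  have : (X + C (l i - μ i)) * aeval (X + C (l i - μ i)) u - r * aeval (X + C (l i - μ i)) u
      = -((r - (X + C (l i - μ i))) * aeval (X + C (l i - μ i)) u) := by ring
  rw [this]
  exact neg_mem (Ideal.mul_mem_right _ _ hr)

lemma Ψ_smul [DecidableEq ι] (r : ℂ[X])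
    (hr : ∀ i, r - (X + C (l i - μ i)) ∈ Ideal.span {(X - C (μ i)) ^ e i})
    (w : ⨁ i, ℂ[X] ⧸ (ℂ[X] ∙ p i ^ e i)) :
    DFinsupp.mapRange.linearEquiv (fun i => ψi ι p e l μ i hl) ((X : ℂ[X]) • w)
      = r • DFinsupp.mapRange.linearEquiv (fun i => ψi ι p e l μ i hl) w := by
  have happly : ∀ (v : ⨁ i, ℂ[X] ⧸ (ℂ[X] ∙ p i ^ e i)) (i : ι),
      DFinsupp.mapRange.linearEquiv (fun i => ψi ι p e l μ i hl) v i
        = ψi ι p e l μ i hl (v i) := fun v i => rfl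
  ext i
  rw [happly, DFinsupp.smul_apply, DFinsupp.smul_apply, happly]
  exact ψi_smul ι p e l μ hl i r (hr i) (w i)

/-- The target direct sum type. -/
abbrev Wty : Type := ⨁ i, ℂ[X] ⧸ Ideal.span {(X - C (μ i)) ^ e i}

/-- Scalar multiplication by polynomials on the direct sum, as an algebra hom. -/
def Θμ : ℂ[X] →ₐ[ℂ] Module.End ℂ (Wty ι e μ) := Algebra.lsmul ℂ ℂ _

lemma aeval_Θμ (s : ℂ[X]) : aeval (Θμ ι e μ X) s = Θμ ι e μ s := by
  rw [Polynomial.aeval_algHom_apply (Θμ ι e μ) X s, aeval_X_left_apply]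

lemma Θμ_apply (s : ℂ[X]) (w : Wty ι e μ) : Θμ ι e μ s w = s • w := rfl

end StmtAux

theorem stmt_1 {n : ℕ} (S : Matrix (Fin n) (Fin n) ℂ) :
    ∃ (T : Matrix (Fin n) (Fin n) ℂ) (r : ℂ[X]),
      S = Polynomial.aeval T r ∧ T.charpoly = minpoly ℂ T := by
  classical
  set Φ : Matrix (Fin n) (Fin n) ℂ ≃ₐ[ℂ] Module.End ℂ (Fin n → ℂ) := Matrix.toLinAlgEquiv' with hΦ
  set f : Module.End ℂ (Fin n → ℂ) := Φ S with hf
  -- `Fin n → ℂ`, as a `ℂ[X]`-module via `f`, is a finitely generated torsion module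
  have htor : Module.IsTorsion ℂ[X] (Module.AEval' f) := by
    intro x
    refine ⟨⟨LinearMap.charpoly f,
      mem_nonZeroDivisors_of_ne_zero (LinearMap.charpoly_monic f).ne_zero⟩, ?_⟩
    apply (Module.AEval'.of f).symm.injective
    rw [Submonoid.smul_def, Module.AEval.of_symm_smul, LinearMap.aeval_self_charpoly]
    simp
  obtain ⟨ι, hι, p, hirr, e, ⟨g⟩⟩ := Module.equiv_directSum_of_isTorsion htor
  -- each irreducible factor is linear
  have hlin : ∀ i, ∃ l : ℂ, Associated (p i) (X - C l) := by
    intro i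
    have hp0 : (p i) ≠ 0 := (hirr i).ne_zero
    have hm : (normalize (p i)).Monic := Polynomial.monic_normalize hp0
    have hassoc : Associated (p i) (normalize (p i)) := (normalize_associated (p i)).symm
    have hd : (normalize (p i)).natDegree = 1 := by
      have h1 : (p i).degree = 1 := IsAlgClosed.degree_eq_one_of_irreducible ℂ (hirr i)
      have h2 : (normalize (p i)).degree = 1 := by
        rw [Polynomial.degree_normalize]; exact h1
      exact natDegree_eq_of_degree_eq_some h2
    refine ⟨-((normalize (p i)).coeff 0), ?_⟩
    have h3 := hm.eq_X_add_C hd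
    rw [map_neg, sub_neg_eq_add, ← h3]
    exact hassoc
  choose l hl using hlin
  -- choose pairwise distinct new eigenvalues
  obtain ⟨μ, hμ⟩ : ∃ μ : ι → ℂ, Function.Injective μ :=
    ⟨fun i => ((Fintype.equivFin ι i : ℕ) : ℂ), fun i j h =>
      (Fintype.equivFin ι).injective (Fin.val_injective (Nat.cast_injective h))⟩
  have hcopQ : Pairwise (Function.onFun IsCoprime fun i => (X - C (μ i)) ^ e i) := fun i j hij =>
    ((pairwise_coprime_X_sub_C hμ) hij).pow
  have hcop : Pairwise fun i j => IsCoprime (Ideal.span {(X - C (μ i)) ^ e i})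
      (Ideal.span {(X - C (μ j)) ^ e j}) := fun i j hij =>
    (Ideal.isCoprime_span_singleton_iff _ _).mpr (hcopQ hij)
  -- Hermite interpolation by CRT
  obtain ⟨r, hr⟩ := Ideal.exists_forall_sub_mem_ideal hcop (fun i => X + C (l i - μ i))
  -- the full change of variables
  set Ψ := DFinsupp.mapRange.linearEquiv (fun i => ψi ι p e l μ i hl) with hΨdef
  set E : (Fin n → ℂ) ≃ₗ[ℂ] ⨁ i, ℂ[X] ⧸ Ideal.span {(X - C (μ i)) ^ e i} :=
    (Module.AEval'.of f).trans ((g.restrictScalars ℂ).trans Ψ) with hEdef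
  have hE : ∀ v, E (f v) = r • E v := by
    intro v
    have h1 : (Module.AEval'.of f) (f v) = (X : ℂ[X]) • (Module.AEval'.of f v) :=
      (Module.AEval'.X_smul_of f v).symm
    have h2 : (g.restrictScalars ℂ) ((X : ℂ[X]) • (Module.AEval'.of f v))
        = (X : ℂ[X]) • (g.restrictScalars ℂ) (Module.AEval'.of f v) := g.map_smul _ _
    rw [hEdef]
    simp only [LinearEquiv.trans_apply]
    rw [h1, h2]
    exact Ψ_smul ι p e l μ hl r hr _
  set Θ : ℂ[X] →ₐ[ℂ] Module.End ℂ (Wty ι e μ) := Θμ ι e μ with hΘ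
  set Tlin : Module.End ℂ (Fin n → ℂ) := (endCongr E).symm (Θ X) with hTlin
  have key0 : ∀ w, Θ r w = E (f (E.symm w)) := by
    intro w
    have h5 := hE (E.symm w)
    rw [LinearEquiv.apply_symm_apply] at h5
    exact (Θμ_apply ι e μ r w).trans h5.symm
  have key : Θ r = endCongr E f := LinearMap.ext fun w => (key0 w).trans rfl
  have haev : ∀ s : ℂ[X], aeval Tlin s = (endCongr E).symm (Θ s) := by
    intro s
    rw [hTlin]
    exact (Polynomial.aeval_algHom_apply (endCongr E).symm (Θ X) s).trans
      (congrArg _ (aeval_Θμ ι e μ s))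
  have h4 : aeval Tlin r = f := by
    rw [haev, key, AlgEquiv.symm_apply_apply]
  refine ⟨Φ.symm Tlin, r, ?_, ?_⟩
  · have hv2 : aeval (Φ.symm Tlin) r = Φ.symm (aeval Tlin r) :=
      Polynomial.aeval_algHom_apply Φ.symm Tlin r
    rw [hv2, h4, hf, AlgEquiv.symm_apply_apply]
  · -- the nonderogatory property
    apply charpoly_eq_minpoly_aux _ (∏ i, (X - C (μ i)) ^ e i)
    · -- degree count
      have hfr : ∀ i, Module.finrank ℂ (ℂ[X] ⧸ Ideal.span {(X - C (μ i)) ^ e i}) = e i := by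
        intro i
        have hne : ((X - C (μ i)) ^ e i) ≠ 0 := pow_ne_zero _ (X_sub_C_ne_zero _)
        have h12 := (AdjoinRoot.powerBasis hne).finrank
        rw [AdjoinRoot.powerBasis_dim] at h12
        have h13 : ((X - C (μ i)) ^ e i).natDegree = e i := by
          rw [natDegree_pow, natDegree_X_sub_C, mul_one]
        exact h12.trans h13
      have hfin : ∀ i, Module.Finite ℂ (ℂ[X] ⧸ Ideal.span {(X - C (μ i)) ^ e i}) := by
        intro i
        have hne : ((X - C (μ i)) ^ e i) ≠ 0 := pow_ne_zero _ (X_sub_C_ne_zero _)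
        exact (AdjoinRoot.powerBasis hne).finite
      haveI := hfin
      have hdim : n = ∑ i, e i := by
        have h6 : Module.finrank ℂ (Fin n → ℂ) = n := by
          rw [Module.finrank_fintype_fun_eq_card, Fintype.card_fin]
        rw [← h6, E.finrank_eq, Module.finrank_directSum]
        exact Finset.sum_congr rfl fun i _ => hfr i
      have hq : (∏ i, (X - C (μ i)) ^ e i).natDegree = ∑ i, e i := by
        rw [Polynomial.natDegree_prod]
        · exact Finset.sum_congr rfl fun i _ => by
            rw [natDegree_pow, natDegree_X_sub_C, mul_one]
        · exact fun i _ => pow_ne_zero _ (X_sub_C_ne_zero _)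
      rw [hq, ← hdim]
    · -- each factor divides the minimal polynomial
      set m := minpoly ℂ (Φ.symm Tlin) with hm
      have hz : aeval (Φ.symm Tlin) m = 0 := minpoly.aeval ℂ _
      rw [Polynomial.aeval_algHom_apply Φ.symm Tlin m] at hz
      have hz2 : aeval Tlin m = 0 := by
        apply Φ.symm.injective
        rw [hz, map_zero]
      rw [haev] at hz2
      have hz3 : Θ m = 0 := by
        apply (endCongr E).symm.injective
        rw [hz2, map_zero]
      have hdvd : ∀ i, (X - C (μ i)) ^ e i ∣ m := by
        intro i
        set w : Wty ι e μ := DirectSum.of (fun i => ℂ[X] ⧸ Ideal.span {(X - C (μ i)) ^ e i}) i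
          (Ideal.Quotient.mk _ 1) with hwdef
        have h7 : Θ m w = 0 := by rw [hz3]; exact LinearMap.zero_apply w
        have h8 : (Θ m w) i = m • (w i) := by
          rw [hΘ, Θμ_apply]
          exact DFinsupp.smul_apply m w i
        have h9 : (w i) = Ideal.Quotient.mk (Ideal.span {(X - C (μ i)) ^ e i}) 1 := by
          rw [hwdef]
          exact DirectSum.of_eq_same _ _
        have h10 : m • (Ideal.Quotient.mk (Ideal.span {(X - C (μ i)) ^ e i}) 1)
            = Ideal.Quotient.mk _ m := by
          show Ideal.Quotient.mk _ (m * 1) = _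
          rw [mul_one]
        have h11 : Ideal.Quotient.mk (Ideal.span {(X - C (μ i)) ^ e i}) m = 0 := by
          rw [← h10, ← h9, ← h8, h7]
          rfl
        rw [Ideal.Quotient.eq_zero_iff_mem, Ideal.mem_span_singleton] at h11
        exact h11
      exact Finset.prod_dvd_of_coprime (hcopQ.set_pairwise _) fun i _ => hdvd i
end

section
/- Let S be the 5×5 real symmetric matrix with S_{1,j} = S_{j,1} = 1 for j = 2,3,4,5 and all other entries 0, and let H be the 5×5 real matrix with H_{2,2} = H_{3,3} = 1, H_{2,3} = H_{3,2} = −1, and all other entries 0. Then there is no polynomial p with real coefficients such that p(S) = H. -/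
open Polynomial Matrix

theorem stmt_7 :
    let S : Matrix (Fin 5) (Fin 5) ℝ :=
      !![0,1,1,1,1; 1,0,0,0,0; 1,0,0,0,0; 1,0,0,0,0; 1,0,0,0,0]
    let H : Matrix (Fin 5) (Fin 5) ℝ :=
      !![0,0,0,0,0; 0,1,-1,0,0; 0,-1,1,0,0; 0,0,0,0,0; 0,0,0,0,0]
    ¬ ∃ p : ℝ[X], Polynomial.aeval S p = H := by
  intro S H ⟨p, hp⟩
  set e : Fin 5 ≃ Fin 5 := Equiv.swap 2 3 with he
  have hS : Matrix.reindexAlgEquiv ℝ ℝ e S = S := by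
    ext i j
    fin_cases i <;> fin_cases j <;>
      simp [Matrix.reindexAlgEquiv_apply, Matrix.reindex_apply, S, he, Equiv.swap_apply_def,
        Matrix.vecHead, Matrix.vecTail]
  have key : Matrix.reindexAlgEquiv ℝ ℝ e (aeval S p) = aeval S p := by
    have h := (Polynomial.aeval_algHom_apply
      ((Matrix.reindexAlgEquiv ℝ ℝ e).toAlgHom) S p).symm
    rwa [AlgEquiv.toAlgHom_eq_coe, AlgEquiv.coe_algHom, hS] at h
  have h12 : Matrix.reindexAlgEquiv ℝ ℝ e (aeval S p) 1 2 = (aeval S p) 1 2 := by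
    rw [key]
  rw [hp] at h12
  simp [Matrix.reindexAlgEquiv_apply, Matrix.reindex_apply, H, he, Equiv.swap_apply_def,
    Matrix.vecHead, Matrix.vecTail] at h12
end

section
/- Let S be the 5×5 real symmetric matrix with S_{1,j} = S_{j,1} = 1 for j = 2,3,4,5 and all other entries 0, and let H be the 5×5 real matrix with H_{2,2} = H_{3,3} = 1, H_{2,3} = H_{3,2} = −1, and all other entries 0. For every real number α and every polynomial q with real coefficients, the matrix F = α·H + q(S) satisfies FS = SF; moreover, if α ≠ 0, then there is no polynomial h with real coefficients such that h(S) = F. -/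
open Polynomial Matrix

lemma commute_aeval_aux {n : Type*} [Fintype n] [DecidableEq n]
    (P S : Matrix n n ℝ) (h : Commute P S) (p : ℝ[X]) :
    Commute P (Polynomial.aeval S p) := by
  induction p using Polynomial.induction_on' with
  | add f g hf hg => simpa [map_add] using hf.add_right hg
  | monomial k a =>
      simp only [Polynomial.aeval_monomial]
      exact (Algebra.commute_algebraMap_right a P).mul_right (h.pow_right k)

set_option maxHeartbeats 1000000 in
theorem stmt_8 :
    let S : Matrix (Fin 5) (Fin 5) ℝ :=
      !![0,1,1,1,1; 1,0,0,0,0; 1,0,0,0,0; 1,0,0,0,0; 1,0,0,0,0]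
    let H : Matrix (Fin 5) (Fin 5) ℝ :=
      !![0,0,0,0,0; 0,1,-1,0,0; 0,-1,1,0,0; 0,0,0,0,0; 0,0,0,0,0]
    ∀ (α : ℝ) (q : ℝ[X]),
      (α • H + Polynomial.aeval S q) * S = S * (α • H + Polynomial.aeval S q) ∧
      (α ≠ 0 → ¬ ∃ h : ℝ[X], Polynomial.aeval S h = α • H + Polynomial.aeval S q) := by
  intro S H α q
  have hq : Commute S (Polynomial.aeval S q) :=
    commute_aeval_aux S S (Commute.refl S) q
  have hHS : H * S = 0 := by
    ext i j
    fin_cases i <;> fin_cases j <;>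
      simp [S, H, Matrix.mul_apply, Fin.sum_univ_five, Matrix.vecHead, Matrix.vecTail]
  have hSH : S * H = 0 := by
    ext i j
    fin_cases i <;> fin_cases j <;>
      simp [S, H, Matrix.mul_apply, Fin.sum_univ_five, Matrix.vecHead, Matrix.vecTail]
  constructor
  · rw [add_mul, mul_add, smul_mul_assoc, mul_smul_comm, hHS, hSH, hq.eq]
  · rintro hα ⟨h, hh⟩
    set P : Matrix (Fin 5) (Fin 5) ℝ :=
      !![1,0,0,0,0; 0,1,0,0,0; 0,0,0,1,0; 0,0,1,0,0; 0,0,0,0,1] with hP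
    have hPS : Commute P S := by
      show P * S = S * P
      ext i j
      fin_cases i <;> fin_cases j <;>
        simp [S, P, Matrix.mul_apply, Fin.sum_univ_five, Matrix.vecHead, Matrix.vecTail]
    have hN : Polynomial.aeval S (h - q) = α • H := by
      rw [map_sub, hh]; exact add_sub_cancel_right _ _
    have hc : Commute P (α • H) := hN ▸ commute_aeval_aux P S hPS (h - q)
    have := congrFun (congrFun hc.eq 1) 2
    simp [P, H, Matrix.mul_apply, Matrix.smul_apply, Fin.sum_univ_five, Matrix.vecHead, Matrix.vecTail] at this
    exact hα this
end

section
/- Let a, b, c, d be nonzero real numbers and let M be the 5×5 real symmetric matrix whose first row is (0, a, b, c, d), whose first column is (0, a, b, c, d)ᵀ, and all of whose other entries are 0. Then the characteristic polynomial of M equals X³·(X² − (a² + b² + c² + d²)); in particular 0 is an eigenvalue of M of algebraic multiplicity 3, and the characteristic polynomial of M does not equal its minimal polynomial over ℝ (M is not shift-enabled). -/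
open Polynomial Matrix

set_option maxHeartbeats 2000000 in
theorem stmt_9 (a b c d : ℝ) (ha : a ≠ 0) (hb : b ≠ 0) (hc : c ≠ 0) (hd : d ≠ 0) :
    let M : Matrix (Fin 5) (Fin 5) ℝ :=
      !![0,a,b,c,d; a,0,0,0,0; b,0,0,0,0; c,0,0,0,0; d,0,0,0,0]
    M.charpoly = X ^ 3 * (X ^ 2 - C (a ^ 2 + b ^ 2 + c ^ 2 + d ^ 2)) ∧
      M.charpoly.rootMultiplicity 0 = 3 ∧
      M.charpoly ≠ minpoly ℝ M := by
  intro M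
  set s : ℝ := a ^ 2 + b ^ 2 + c ^ 2 + d ^ 2 with hs
  have hspos : 0 < s := by positivity
  -- the charmatrix as an explicit matrix
  have hcm : charmatrix M =
      !![X, -C a, -C b, -C c, -C d;
        -C a, X, 0, 0, 0;
        -C b, 0, X, 0, 0;
        -C c, 0, 0, X, 0;
        -C d, 0, 0, 0, X] := by
    ext i j
    fin_cases i <;> fin_cases j <;>
      simp [M, charmatrix_apply_eq, charmatrix_apply_ne, Matrix.vecHead, Matrix.vecTail,
        Function.comp]
  -- the characteristic polynomial
  have hcp : M.charpoly = X ^ 3 * (X ^ 2 - C s) := by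
    rw [Matrix.charpoly, hcm]
    have h1 : (Fin.castSucc 2 : Fin 5) = 2 := rfl
    have h2 : ((Fin.succ 2).castSucc : Fin 5) = 3 := rfl
    simp [Matrix.det_succ_row_zero, Fin.sum_univ_succ, Fin.succAbove, h1, h2]
    rw [hs]
    simp only [map_add, map_pow]
    ring
  refine ⟨hcp, ?_, ?_⟩
  · -- root multiplicity
    have hq : (X ^ 2 - C s : ℝ[X]).eval 0 ≠ 0 := by
      simp [hspos.ne']
    have hqne : (X ^ 2 - C s : ℝ[X]) ≠ 0 := fun h => hq (by simp [h])
    rw [hcp, Polynomial.rootMultiplicity_mul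
      (mul_ne_zero (pow_ne_zero 3 Polynomial.X_ne_zero) hqne)]
    have h1 : (X ^ 3 : ℝ[X]).rootMultiplicity 0 = 3 := by
      simpa using Polynomial.rootMultiplicity_X_sub_C_pow (0 : ℝ) 3
    have h2 : (X ^ 2 - C s : ℝ[X]).rootMultiplicity 0 = 0 :=
      Polynomial.rootMultiplicity_eq_zero hq
    omega
  · -- charpoly ≠ minpoly, by degree
    have hM3 : M ^ 3 = s • M := by
      rw [pow_succ, pow_two]
      ext i j
      fin_cases i <;> fin_cases j <;>
        · simp [M, hs, Matrix.mul_apply, Fin.sum_univ_succ, Matrix.vecHead, Matrix.vecTail,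
            Function.comp]
          try ring
          try simp
    set p : ℝ[X] := X ^ 3 - C s * X with hp
    have hdegCs : (C s * X : ℝ[X]).degree < (X ^ 3 : ℝ[X]).degree := by
      calc (C s * X : ℝ[X]).degree ≤ 1 := by
            exact Polynomial.degree_C_mul_X_le s
        _ < (X ^ 3 : ℝ[X]).degree := by rw [Polynomial.degree_X_pow]; norm_num
    have hpm : p.Monic := (Polynomial.monic_X_pow 3).sub_of_left hdegCs
    have hpdeg : p.degree = 3 := by
      rw [hp, Polynomial.degree_sub_eq_left_of_degree_lt hdegCs, Polynomial.degree_X_pow]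
      rfl
    have haev : Polynomial.aeval M p = 0 := by
      simp only [hp, map_sub, _root_.map_mul, Polynomial.aeval_X_pow, Polynomial.aeval_X,
        Polynomial.aeval_C, hM3, sub_eq_zero]
      ext i j
      simp [Matrix.algebraMap_matrix_apply, Matrix.smul_apply, Matrix.mul_apply,
        Fin.sum_univ_succ, Matrix.one_apply]
      try ring
    have hmin : (minpoly ℝ M).degree ≤ 3 := hpdeg ▸ minpoly.min ℝ M hpm haev
    have hcpdeg : M.charpoly.degree = 5 := by
      simpa using M.charpoly_degree_eq_dim
    intro h
    rw [← h, hcpdeg] at hmin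
    norm_num at hmin
end

section
/- Let S̃ be the 5×5 real symmetric matrix with S̃_{1,j} = S̃_{j,1} = 1 for j = 2,3,4,5, S̃_{2,2} = S̃_{3,3} = 1, and all other entries 0, and let H be the 5×5 real matrix with H_{2,2} = H_{3,3} = 1, H_{2,3} = H_{3,2} = −1, and all other entries 0. Then: (i) the characteristic polynomial of S̃ equals the minimal polynomial of S̃ over ℝ (S̃ is shift-enabled); (ii) H·S̃ = S̃·H; and (iii) there exists a polynomial p with real coefficients such that p(S̃) = H. -/
open Polynomial Matrix

private def Smat : Matrix (Fin 5) (Fin 5) ℝ :=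
  !![0,1,1,1,1; 1,1,0,0,0; 1,0,1,0,0; 1,0,0,0,0; 1,0,0,0,0]

private lemma hS2 : Smat ^ 2 =
    !![4,1,1,0,0; 1,2,1,1,1; 1,1,2,1,1; 0,1,1,1,1; 0,1,1,1,1] := by
  rw [pow_two]
  ext i j
  fin_cases i <;> fin_cases j <;>
    simp [Smat, Matrix.mul_apply, Fin.sum_univ_five, Matrix.cons_val_zero,
      Matrix.cons_val_one, Matrix.head_cons, Matrix.cons_val_succ,
      Matrix.vecHead, Matrix.vecTail] <;> norm_num

private lemma hS3 : Smat ^ 3 =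
    !![2,5,5,4,4; 5,3,2,1,1; 5,2,3,1,1; 4,1,1,0,0; 4,1,1,0,0] := by
  rw [pow_succ, hS2]
  ext i j
  fin_cases i <;> fin_cases j <;>
    simp [Smat, Matrix.mul_apply, Fin.sum_univ_five, Matrix.cons_val_zero,
      Matrix.cons_val_one, Matrix.head_cons, Matrix.cons_val_succ,
      Matrix.vecHead, Matrix.vecTail] <;> norm_num

private lemma hS4 : Smat ^ 4 =
    !![18,7,7,2,2; 7,8,7,5,5; 7,7,8,5,5; 2,5,5,4,4; 2,5,5,4,4] := by
  rw [pow_succ, hS3]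
  ext i j
  fin_cases i <;> fin_cases j <;>
    simp [Smat, Matrix.mul_apply, Fin.sum_univ_five, Matrix.cons_val_zero,
      Matrix.cons_val_one, Matrix.head_cons, Matrix.cons_val_succ,
      Matrix.vecHead, Matrix.vecTail] <;> norm_num

private lemma hdeg : 5 ≤ (minpoly ℝ Smat).natDegree := by
  by_contra h
  push_neg at h
  have hm : (minpoly ℝ Smat).Monic :=
    minpoly.monic ⟨Smat.charpoly, Smat.charpoly_monic, Smat.aeval_self_charpoly⟩
  have h0 : (Polynomial.aeval Smat (minpoly ℝ Smat)) = 0 := minpoly.aeval ℝ Smat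
  rw [Polynomial.aeval_eq_sum_range' h] at h0
  set c : ℕ → ℝ := fun i => (minpoly ℝ Smat).coeff i with hc
  rw [Finset.sum_range_succ, Finset.sum_range_succ, Finset.sum_range_succ,
    Finset.sum_range_succ, Finset.sum_range_one, pow_zero, pow_one,
    hS2, hS3, hS4] at h0
  have key : ∀ i j : Fin 5,
      (c 0 • (1 : Matrix (Fin 5) (Fin 5) ℝ) + c 1 • Smat
        + c 2 • (!![4,1,1,0,0; 1,2,1,1,1; 1,1,2,1,1; 0,1,1,1,1; 0,1,1,1,1] : Matrix (Fin 5) (Fin 5) ℝ)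
        + c 3 • (!![2,5,5,4,4; 5,3,2,1,1; 5,2,3,1,1; 4,1,1,0,0; 4,1,1,0,0] : Matrix (Fin 5) (Fin 5) ℝ)
        + c 4 • (!![18,7,7,2,2; 7,8,7,5,5; 7,7,8,5,5; 2,5,5,4,4; 2,5,5,4,4] : Matrix (Fin 5) (Fin 5) ℝ)) i j
        = (0 : Matrix (Fin 5) (Fin 5) ℝ) i j := by
    intro i j; rw [h0]
  have e1 := key 0 0
  have e2 := key 0 1
  have e3 := key 0 3
  have e4 := key 1 1
  have e5 := key 3 3
  simp [Smat, Matrix.one_apply, Matrix.add_apply, Matrix.smul_apply,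
    Matrix.cons_val_zero, Matrix.cons_val_one, Matrix.head_cons,
    Matrix.cons_val_succ, Matrix.vecHead, Matrix.vecTail] at e1 e2 e3 e4 e5
  have hall : ∀ i ≤ 4, c i = 0 := by
    intro i hi
    interval_cases i <;> linarith
  have h1 : c (minpoly ℝ Smat).natDegree = 1 := hm
  rw [hall _ (by omega)] at h1
  exact zero_ne_one h1

set_option maxHeartbeats 1000000 in
theorem stmt_10 :
    let Stilde : Matrix (Fin 5) (Fin 5) ℝ :=
      !![0,1,1,1,1; 1,1,0,0,0; 1,0,1,0,0; 1,0,0,0,0; 1,0,0,0,0]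
    let H : Matrix (Fin 5) (Fin 5) ℝ :=
      !![0,0,0,0,0; 0,1,-1,0,0; 0,-1,1,0,0; 0,0,0,0,0; 0,0,0,0,0]
    Stilde.charpoly = minpoly ℝ Stilde ∧
      H * Stilde = Stilde * H ∧
      ∃ p : ℝ[X], Polynomial.aeval Stilde p = H := by
  intro Stilde H
  have hSdef : Stilde = Smat := rfl
  refine ⟨?_, ?_, ?_⟩
  · rw [hSdef]
    have hdvd : minpoly ℝ Smat ∣ Smat.charpoly :=
      minpoly.dvd ℝ Smat Smat.aeval_self_charpoly
    have hne : Smat.charpoly ≠ 0 := Smat.charpoly_monic.ne_zero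
    have hdegc : Smat.charpoly.natDegree = 5 := by
      simp [Matrix.charpoly_natDegree_eq_dim]
    have hassoc := Polynomial.associated_of_dvd_of_natDegree_le hdvd hne
      (by rw [hdegc]; exact hdeg)
    exact (Polynomial.eq_of_monic_of_associated
      (minpoly.monic ⟨Smat.charpoly, Smat.charpoly_monic, Smat.aeval_self_charpoly⟩)
      Smat.charpoly_monic hassoc).symm
  · ext i j
    fin_cases i <;> fin_cases j <;>
      simp [Stilde, H, Matrix.mul_apply, Fin.sum_univ_five, Matrix.cons_val_zero,
        Matrix.cons_val_one, Matrix.head_cons, Matrix.cons_val_succ,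
        Matrix.vecHead, Matrix.vecTail] <;> norm_num
  · refine ⟨C (-1) * X^4 + C 1 * X^3 + C 4 * X^2 + C (-2) * X, ?_⟩
    rw [hSdef]
    have haev : Polynomial.aeval Smat (C (-1) * X^4 + C 1 * X^3 + C 4 * X^2 + C (-2) * X : ℝ[X])
        = (-1 : ℝ) • Smat ^ 4 + (1 : ℝ) • Smat ^ 3 + (4 : ℝ) • Smat ^ 2 + (-2 : ℝ) • Smat := by
      simp only [map_add, _root_.map_mul, map_pow, aeval_X, aeval_C,
        Algebra.algebraMap_eq_smul_one, smul_mul_assoc, one_mul]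
    rw [haev, hS2, hS3, hS4]
    show _ = (!![0,0,0,0,0; 0,1,-1,0,0; 0,-1,1,0,0; 0,0,0,0,0; 0,0,0,0,0] :
      Matrix (Fin 5) (Fin 5) ℝ)
    ext i j
    fin_cases i <;> fin_cases j <;>
      simp [Smat, Matrix.add_apply, Matrix.smul_apply, Matrix.cons_val_zero,
        Matrix.cons_val_one, Matrix.head_cons, Matrix.cons_val_succ,
        Matrix.vecHead, Matrix.vecTail] <;> norm_num
end

section
/- Let S' be the 4×4 real symmetric matrix with S'_{1,2} = S'_{2,1} = S'_{2,3} = S'_{3,2} = S'_{3,4} = S'_{4,3} = S'_{1,4} = S'_{4,1} = 1 and all other entries 0, and let H' be the 4×4 real matrix with rows (0,0,−1,1), (0,−1,1,0), (−1,1,0,0), (1,0,0,−1). Then there is no polynomial h with real coefficients such that h(S') = H'. -/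
open Polynomial Matrix

theorem stmt_14 :
    let S' : Matrix (Fin 4) (Fin 4) ℝ :=
      !![0,1,0,1; 1,0,1,0; 0,1,0,1; 1,0,1,0]
    let H' : Matrix (Fin 4) (Fin 4) ℝ :=
      !![0,0,-1,1; 0,-1,1,0; -1,1,0,0; 1,0,0,-1]
    ¬ ∃ h : ℝ[X], Polynomial.aeval S' h = H' := by
  intro S' H'
  rintro ⟨h, hh⟩
  set P : Matrix (Fin 4) (Fin 4) ℝ := !![0,0,1,0; 0,1,0,0; 1,0,0,0; 0,0,0,1] with hP
  have hcomm : Commute P S' := by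
    show P * S' = S' * P
    ext i j
    fin_cases i <;> fin_cases j <;>
      simp [hP, S', Matrix.mul_apply, Fin.sum_univ_four, Matrix.vecHead, Matrix.vecTail]
  have key : ∀ q : ℝ[X], Commute P (aeval S' q) := by
    intro q
    induction q using Polynomial.induction_on with
    | C a =>
      rw [aeval_C]
      exact ((Algebra.commutes a P).symm : Commute P _)
    | add p q hp hq => simpa [map_add] using hp.add_right hq
    | monomial n a _ =>
      simp only [_root_.map_mul, map_pow, aeval_C, aeval_X]
      have hA : Commute P ((algebraMap ℝ (Matrix (Fin 4) (Fin 4) ℝ)) a) :=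
        (Algebra.commutes a P).symm
      exact hA.mul_right (hcomm.pow_right (n + 1))
  have hPH : P * H' = H' * P := hh ▸ key h
  have h01 := congrFun (congrFun hPH 0) 1
  simp [hP, H', Matrix.mul_apply, Fin.sum_univ_four, Matrix.vecHead, Matrix.vecTail] at h01
end

section
/- Let S' be the 4×4 real symmetric matrix with S'_{1,2} = S'_{2,1} = S'_{2,3} = S'_{3,2} = S'_{3,4} = S'_{4,3} = S'_{1,4} = S'_{4,1} = 1 and all other entries 0, let L = 2·I − S' be the graph Laplacian of the 4-cycle, and let H' be the 4×4 real matrix with rows (0,0,−1,1), (0,−1,1,0), (−1,1,0,0), (1,0,0,−1). Then H'·L = L·H', the characteristic polynomial of L does not equal its minimal polynomial over ℝ, and there is no polynomial h with real coefficients such that h(L) = H'. -/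
open Polynomial Matrix


private lemma stmt_18_aux (h : ℝ[X])
    (hh : Polynomial.aeval
        (!![2,-1,0,-1; -1,2,-1,0; 0,-1,2,-1; -1,0,-1,2] : Matrix (Fin 4) (Fin 4) ℝ) h
      = !![0,0,-1,1; 0,-1,1,0; -1,1,0,0; 1,0,0,-1]) : False := by
  set E : Matrix (Fin 4) (Fin 4) ℝ := !![2,-1,0,-1; -1,2,-1,0; 0,-1,2,-1; -1,0,-1,2] with hE
  have hLv : E.mulVec ![1,0,-1,0] = (2:ℝ) • ![1,0,-1,0] := by
    ext i
    fin_cases i <;>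
      norm_num [hE, Matrix.mulVec, dotProduct, Fin.sum_univ_four, Matrix.cons_val_two, Matrix.cons_val_three, Matrix.vecHead, Matrix.vecTail]
  have hpow : ∀ n : ℕ, (E^n).mulVec ![1,0,-1,0] = ((2:ℝ)^n) • ![1,0,-1,0] := by
    intro n
    induction n with
    | zero => simp
    | succ k ih =>
      rw [pow_succ, ← Matrix.mulVec_mulVec, hLv, Matrix.mulVec_smul, ih,
        smul_smul, pow_succ, mul_comm]
  have key : ∀ q : ℝ[X],
      (aeval E q).mulVec ![1,0,-1,0] = (Polynomial.eval 2 q) • ![(1:ℝ),0,-1,0] := by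
    intro q
    induction q using Polynomial.induction_on' with
    | add p q hp hq =>
      simp [Matrix.add_mulVec, hp, hq, add_smul]
    | monomial n a =>
      rw [aeval_monomial, Algebra.algebraMap_eq_smul_one, smul_mul_assoc, one_mul,
        Matrix.smul_mulVec, hpow, smul_smul]
      simp [smul_smul, mul_comm]
  have h1 := congrFun ((key h).symm.trans (congrArg (fun M => M.mulVec ![1,0,-1,0]) hh)) 1
  norm_num [Matrix.mulVec, dotProduct, Fin.sum_univ_four, Matrix.cons_val_two, Matrix.cons_val_three, Matrix.vecHead, Matrix.vecTail] at h1

theorem stmt_18 :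
    let S' : Matrix (Fin 4) (Fin 4) ℝ :=
      !![0,1,0,1; 1,0,1,0; 0,1,0,1; 1,0,1,0]
    let L : Matrix (Fin 4) (Fin 4) ℝ := 2 • (1 : Matrix (Fin 4) (Fin 4) ℝ) - S'
    let H' : Matrix (Fin 4) (Fin 4) ℝ :=
      !![0,0,-1,1; 0,-1,1,0; -1,1,0,0; 1,0,0,-1]
    H' * L = L * H' ∧
      L.charpoly ≠ minpoly ℝ L ∧
      ¬ ∃ h : ℝ[X], Polynomial.aeval L h = H' := by
  intro S' L H'
  have hL : L = !![2,-1,0,-1; -1,2,-1,0; 0,-1,2,-1; -1,0,-1,2] := by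
    show 2 • (1 : Matrix (Fin 4) (Fin 4) ℝ) - S' = _
    ext i j
    fin_cases i <;> fin_cases j <;>
      simp only [Matrix.sub_apply, Matrix.smul_apply, Matrix.one_apply, S'] <;>
      norm_num <;> decide
  have hL2 : L ^ 2 = !![6,-4,2,-4; -4,6,-4,2; 2,-4,6,-4; -4,2,-4,6] := by
    rw [pow_two, hL]
    ext i j
    fin_cases i <;> fin_cases j <;> norm_num [Matrix.mul_apply, Fin.sum_univ_four, Matrix.cons_val_two, Matrix.cons_val_three, Matrix.vecHead, Matrix.vecTail]
  have hL3 : L ^ 3 = !![20,-16,12,-16; -16,20,-16,12; 12,-16,20,-16; -16,12,-16,20] := by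
    rw [pow_succ, hL2, hL]
    ext i j
    fin_cases i <;> fin_cases j <;> norm_num [Matrix.mul_apply, Fin.sum_univ_four, Matrix.cons_val_two, Matrix.cons_val_three, Matrix.vecHead, Matrix.vecTail]
  refine ⟨?_, ?_, ?_⟩
  · rw [hL]
    ext i j
    fin_cases i <;> fin_cases j <;>
      simp [H', Matrix.mul_apply, Fin.sum_univ_four, Matrix.vecHead, Matrix.vecTail] <;> ring
  · have hp : aeval L (X^3 - C 6 * X^2 + C 8 * X : ℝ[X]) = 0 := by
      have h1 : aeval L (X^3 - C 6 * X^2 + C 8 * X : ℝ[X])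
          = L^3 - (6:ℝ) • L^2 + (8:ℝ) • L := by
        simp [Algebra.algebraMap_eq_smul_one, smul_mul_assoc]
      rw [h1, hL3, hL2, hL]
      ext i j
      fin_cases i <;> fin_cases j <;>
        norm_num [Matrix.smul_apply, Matrix.sub_apply, Matrix.add_apply]
    have hpne : (X^3 - C 6 * X^2 + C 8 * X : ℝ[X]) ≠ 0 := by
      intro h
      have h2 := congrArg (Polynomial.eval 1) h
      simp at h2
      norm_num at h2
    have hdvd : minpoly ℝ L ∣ (X^3 - C 6 * X^2 + C 8 * X : ℝ[X]) := minpoly.dvd ℝ L hp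
    have hdeg : (minpoly ℝ L).natDegree ≤ 3 := by
      have h3 : (X^3 - C 6 * X^2 + C 8 * X : ℝ[X]).natDegree = 3 := by
        compute_degree!
      calc (minpoly ℝ L).natDegree ≤ (X^3 - C 6 * X^2 + C 8 * X : ℝ[X]).natDegree :=
            Polynomial.natDegree_le_of_dvd hdvd hpne
        _ = 3 := h3
    have hchar : (L.charpoly).natDegree = 4 := by
      rw [Matrix.charpoly_natDegree_eq_dim]
      simp
    intro h
    rw [h] at hchar
    omega
  · rintro ⟨h, hh⟩
    rw [hL] at hh
    exact stmt_18_aux h hh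
end
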